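/- Let U be a nonprincipal ultrafilter on a countably infinite I, *ℤ = ∏_U ℤ. For every maximal ideal m of *ℤ, one has m = I(F(m)), i.e., m = {n ∈ *ℤ : pr(n) ∈ F(m)}, where F(m) = {pr(a) : a ∈ m}. Moreover the map m ↦ F(m) is an injection from maximal ideals of *ℤ into maximal filters on pr(*ℤ). -/

import Mathlib

open Filter

/-- `p` is a prime of the ultrapower `*ℤ = ∏_U ℤ` if `p > 0`, `p ≠ 1`, and the only
divisors of `p` in `*ℤ` are `±1` and `±p`. -/
def IsNSPrime {I : Type*} {U : Ultrafilter I} (p : (↑U : Filter I).Germ ℤ) : Prop :=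
  0 < p ∧ p ≠ 1 ∧ ∀ y : (↑U : Filter I).Germ ℤ, y ∣ p → y = 1 ∨ y = -1 ∨ y = p ∨ y = -p

/-- The prime factor set `pr(n)` of `n ∈ *ℤ`: the set of primes of `*ℤ` dividing `n`. -/
def primeFactor {I : Type*} {U : Ultrafilter I} (n : (↑U : Filter I).Germ ℤ) :
    Set ((↑U : Filter I).Germ ℤ) :=
  {p | IsNSPrime p ∧ p ∣ n}

/-- A filter on the collection `pr(*ℤ)` of prime-factor sets: a family of prime-factor
sets not containing `∅`, closed under intersection, and upward closed among
prime-factor sets. -/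
def IsPrFilter {I : Type*} {U : Ultrafilter I} (F : Set (Set ((↑U : Filter I).Germ ℤ))) :
    Prop :=
  (∀ S ∈ F, ∃ n : (↑U : Filter I).Germ ℤ, S = primeFactor n) ∧
  ∅ ∉ F ∧
  (∀ S ∈ F, ∀ T ∈ F, S ∩ T ∈ F) ∧
  (∀ S ∈ F, ∀ m : (↑U : Filter I).Germ ℤ, S ⊆ primeFactor m → primeFactor m ∈ F)


section

variable {I : Type*} {U : Ultrafilter I}

lemma germ_eq_iff {f g : I → ℤ} :
    (f : (↑U : Filter I).Germ ℤ) = (g : (↑U : Filter I).Germ ℤ) ↔ ∀ᶠ i in ↑U, f i = g i :=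
  Filter.Germ.coe_eq

lemma germ_eq_one_iff {f : I → ℤ} :
    (f : (↑U : Filter I).Germ ℤ) = 1 ↔ ∀ᶠ i in ↑U, f i = 1 := by
  rw [← Filter.Germ.coe_one (l := (↑U : Filter I))]; exact germ_eq_iff

lemma germ_eq_neg_one_iff {f : I → ℤ} :
    (f : (↑U : Filter I).Germ ℤ) = -1 ↔ ∀ᶠ i in ↑U, f i = -1 := by
  rw [show (-1 : (↑U : Filter I).Germ ℤ) = (((fun _ => -1) : I → ℤ) : (↑U : Filter I).Germ ℤ) from rfl]
  exact germ_eq_iff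

lemma germ_eq_neg_iff {f g : I → ℤ} :
    (f : (↑U : Filter I).Germ ℤ) = -(g : (↑U : Filter I).Germ ℤ) ↔ ∀ᶠ i in ↑U, f i = -g i := by
  rw [← Filter.Germ.coe_neg]; exact germ_eq_iff

lemma germ_dvd_iff {f g : I → ℤ} :
    ((f : (↑U : Filter I).Germ ℤ) ∣ (g : (↑U : Filter I).Germ ℤ)) ↔ ∀ᶠ i in ↑U, f i ∣ g i := by
  constructor
  · rintro ⟨z, hz⟩
    induction z using Filter.Germ.inductionOn with
    | _ w =>
      rw [← Filter.Germ.coe_mul, Filter.Germ.coe_eq] at hz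
      exact hz.mono fun i hi => ⟨w i, hi⟩
  · intro h
    refine ⟨((fun i => g i / f i : I → ℤ) : (↑U : Filter I).Germ ℤ), ?_⟩
    rw [← Filter.Germ.coe_mul, Filter.Germ.coe_eq]
    exact h.mono fun i hi => (Int.mul_ediv_cancel' hi).symm

lemma isNSPrime_coe_iff {f : I → ℤ} :
    IsNSPrime (f : (↑U : Filter I).Germ ℤ) ↔ ∀ᶠ i in ↑U, Prime (f i) ∧ 0 < f i := by
  constructor
  · rintro ⟨hpos, hne, hdvd⟩
    have hpos' : ∀ᶠ i in ↑U, 0 < f i := Filter.Germ.coe_pos.mp hpos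
    rw [Filter.eventually_and]
    refine ⟨?_, hpos'⟩
    by_contra hnp
    have hnp' : ∀ᶠ i in ↑U, ¬ Prime (f i) := Ultrafilter.eventually_not.mpr hnp
    have hne' : ∀ᶠ i in ↑U, f i ≠ 1 := by
      apply Ultrafilter.eventually_not.mpr
      intro h1
      exact hne (germ_eq_one_iff.mpr h1)
    set g : I → ℤ := fun i =>
      if h : 2 ≤ (f i).natAbs ∧ ¬ Nat.Prime (f i).natAbs then
        ((Nat.exists_dvd_of_not_prime2 h.1 h.2).choose : ℤ) else 1 with hg
    have key : ∀ᶠ i in ↑U, g i ∣ f i ∧ 2 ≤ g i ∧ g i < f i := by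
      filter_upwards [hpos', hnp', hne'] with i h0 hp h1
      have h2 : 2 ≤ (f i).natAbs := by omega
      have hnpn : ¬ Nat.Prime (f i).natAbs := fun hn =>
        hp (Int.prime_iff_natAbs_prime.mpr hn)
      have hc := (Nat.exists_dvd_of_not_prime2 h2 hnpn).choose_spec
      have hgi : g i = ((Nat.exists_dvd_of_not_prime2 h2 hnpn).choose : ℤ) := by
        rw [hg]; simp only [dif_pos (⟨h2, hnpn⟩ : _ ∧ _)]
      refine ⟨?_, ?_, ?_⟩
      · rw [hgi]
        exact dvd_trans (Int.natCast_dvd_natCast.mpr hc.1) (Int.natAbs_dvd.mpr dvd_rfl)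
      · rw [hgi]; exact_mod_cast hc.2.1
      · rw [hgi]
        have habs : ((f i).natAbs : ℤ) = f i := Int.natAbs_of_nonneg (le_of_lt h0)
        calc ((Nat.exists_dvd_of_not_prime2 h2 hnpn).choose : ℤ)
            < ((f i).natAbs : ℤ) := by exact_mod_cast hc.2.2
          _ = f i := habs
    have hdvdg : (g : (↑U : Filter I).Germ ℤ) ∣ f :=
      germ_dvd_iff.mpr (key.mono fun i hi => hi.1)
    have hbig : ∀ᶠ i in ↑U, 2 ≤ g i ∧ g i < f i := key.mono fun i hi => hi.2
    rcases hdvd _ hdvdg with h | h | h | h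
    · obtain ⟨i, h1, h2, h3⟩ := ((germ_eq_one_iff.mp h).and hbig).exists; omega
    · obtain ⟨i, h1, h2, h3⟩ := ((germ_eq_neg_one_iff.mp h).and hbig).exists; omega
    · obtain ⟨i, h1, h2, h3⟩ := ((germ_eq_iff.mp h).and hbig).exists; omega
    · obtain ⟨i, h1, h2, h3⟩ := ((germ_eq_neg_iff.mp h).and (hbig.and hpos')).exists
      omega
  · intro h
    refine ⟨Filter.Germ.coe_pos.mpr (h.mono fun i hi => hi.2), ?_, ?_⟩
    · intro h1
      obtain ⟨i, hi1, hi2⟩ := ((germ_eq_one_iff.mp h1).and h).exists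
      exact hi2.1.ne_one hi1
    · intro y hy
      induction y using Filter.Germ.inductionOn with
      | _ w =>
        have hw : ∀ᶠ i in ↑U, w i ∣ f i := germ_dvd_iff.mp hy
        have h4 : ∀ᶠ i in ↑U, w i = 1 ∨ w i = -1 ∨ w i = f i ∨ w i = -f i := by
          filter_upwards [hw, h] with i hwi hpi
          rcases hpi.1.irreducible.isUnit_or_isUnit (hwi.choose_spec) with hu | hu
          · rcases Int.isUnit_iff.mp hu with h | h
            · exact Or.inl h
            · exact Or.inr (Or.inl h)
          · rcases Int.isUnit_iff.mp hu with h | h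
            · refine Or.inr (Or.inr (Or.inl ?_))
              rw [hwi.choose_spec, h, mul_one]
            · refine Or.inr (Or.inr (Or.inr ?_))
              rw [hwi.choose_spec, h]; ring
        rcases Ultrafilter.eventually_or.mp
          (h4.mono fun i hi => hi.imp_right fun hr => hr) with h1 | h'
        · exact Or.inl (germ_eq_one_iff.mpr h1)
        rcases Ultrafilter.eventually_or.mp h' with h1 | h'
        · exact Or.inr (Or.inl (germ_eq_neg_one_iff.mpr h1))
        rcases Ultrafilter.eventually_or.mp h' with h1 | h1
        · exact Or.inr (Or.inr (Or.inl (germ_eq_iff.mpr h1)))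
        · exact Or.inr (Or.inr (Or.inr (germ_eq_neg_iff.mpr h1)))


variable {I : Type*} {U : Ultrafilter I}

lemma nsprime_dvd_mul {p x y : (↑U : Filter I).Germ ℤ} (hp : IsNSPrime p)
    (h : p ∣ x * y) : p ∣ x ∨ p ∣ y := by
  induction p using Filter.Germ.inductionOn with
  | _ f =>
  induction x using Filter.Germ.inductionOn with
  | _ a =>
  induction y using Filter.Germ.inductionOn with
  | _ b =>
  rw [← Filter.Germ.coe_mul] at h
  have h' : ∀ᶠ i in ↑U, f i ∣ a i * b i := germ_dvd_iff.mp h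
  have hp' := isNSPrime_coe_iff.mp hp
  have : ∀ᶠ i in ↑U, f i ∣ a i ∨ f i ∣ b i := by
    filter_upwards [h', hp'] with i h1 h2
    exact (h2.1.2.2 _ _ h1)
  rcases Ultrafilter.eventually_or.mp this with h1 | h1
  · exact Or.inl (germ_dvd_iff.mpr h1)
  · exact Or.inr (germ_dvd_iff.mpr h1)

/-- pointwise gcd on germs -/
noncomputable def germGcd (a b : (↑U : Filter I).Germ ℤ) : (↑U : Filter I).Germ ℤ :=
  Filter.Germ.map₂ (fun x y => (Int.gcd x y : ℤ)) a b

lemma germGcd_bezout (a b : (↑U : Filter I).Germ ℤ) :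
    ∃ u v : (↑U : Filter I).Germ ℤ, germGcd a b = u * a + v * b := by
  induction a using Filter.Germ.inductionOn with
  | _ f =>
  induction b using Filter.Germ.inductionOn with
  | _ g =>
  refine ⟨((fun i => Int.gcdA (f i) (g i)) : I → ℤ), ((fun i => Int.gcdB (f i) (g i)) : I → ℤ), ?_⟩
  rw [germGcd, Filter.Germ.map₂_coe, ← Filter.Germ.coe_mul, ← Filter.Germ.coe_mul,
    ← Filter.Germ.coe_add]
  apply germ_eq_iff.mpr
  apply Filter.Eventually.of_forall
  intro i
  have := Int.gcd_eq_gcd_ab (f i) (g i)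
  simpa [mul_comm] using this

lemma dvd_germGcd_iff {x a b : (↑U : Filter I).Germ ℤ} :
    x ∣ germGcd a b ↔ x ∣ a ∧ x ∣ b := by
  induction a using Filter.Germ.inductionOn with
  | _ f =>
  induction b using Filter.Germ.inductionOn with
  | _ g =>
  induction x using Filter.Germ.inductionOn with
  | _ w =>
  rw [germGcd, Filter.Germ.map₂_coe, germ_dvd_iff, germ_dvd_iff, germ_dvd_iff,
    ← Filter.eventually_and]
  apply Filter.eventually_congr
  apply Filter.Eventually.of_forall
  intro i
  constructor
  · intro h
    exact ⟨h.trans (Int.gcd_dvd_left _ _), h.trans (Int.gcd_dvd_right _ _)⟩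
  · intro ⟨h1, h2⟩
    exact Int.dvd_coe_gcd h1 h2

lemma pr_gcd (a b : (↑U : Filter I).Germ ℤ) :
    primeFactor (germGcd a b) = primeFactor a ∩ primeFactor b := by
  ext p
  simp only [primeFactor, Set.mem_setOf_eq, Set.mem_inter_iff, dvd_germGcd_iff]
  tauto

lemma pr_mul (a b : (↑U : Filter I).Germ ℤ) :
    primeFactor (a * b) = primeFactor a ∪ primeFactor b := by
  ext p
  simp only [primeFactor, Set.mem_setOf_eq, Set.mem_union]
  constructor
  · rintro ⟨hp, hd⟩
    rcases nsprime_dvd_mul hp hd with h | h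
    · exact Or.inl ⟨hp, h⟩
    · exact Or.inr ⟨hp, h⟩
  · rintro (⟨hp, hd⟩ | ⟨hp, hd⟩)
    · exact ⟨hp, hd.mul_right b⟩
    · exact ⟨hp, hd.mul_left a⟩

lemma pr_inter_subset_add (a b : (↑U : Filter I).Germ ℤ) :
    primeFactor a ∩ primeFactor b ⊆ primeFactor (a + b) := by
  rintro p ⟨⟨hp, hda⟩, ⟨_, hdb⟩⟩
  exact ⟨hp, dvd_add hda hdb⟩

lemma pr_subset_mul (a b : (↑U : Filter I).Germ ℤ) :
    primeFactor b ⊆ primeFactor (a * b) := by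
  rintro p ⟨hp, hd⟩
  exact ⟨hp, hd.mul_left a⟩

lemma pr_one : primeFactor (1 : (↑U : Filter I).Germ ℤ) = ∅ := by
  ext p
  simp only [primeFactor, Set.mem_setOf_eq, Set.mem_empty_iff_false, iff_false]
  rintro ⟨hp, hd⟩
  induction p using Filter.Germ.inductionOn with
  | _ f =>
  have h1 : ∀ᶠ i in ↑U, f i ∣ 1 := by
    exact germ_dvd_iff.mp hd
  obtain ⟨i, hi1, hi2⟩ := (h1.and (isNSPrime_coe_iff.mp hp)).exists
  exact hi2.1.not_unit (isUnit_of_dvd_one hi1)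

lemma pr_empty_isUnit {a : (↑U : Filter I).Germ ℤ} (h : primeFactor a = ∅) : IsUnit a := by
  induction a using Filter.Germ.inductionOn with
  | _ f =>
  by_cases hbig : {i | 2 ≤ (f i).natAbs} ∈ U
  · exfalso
    set q : I → ℤ := fun i => if 2 ≤ (f i).natAbs then ((f i).natAbs.minFac : ℤ) else 2 with hq
    have hqprime : ∀ i, Prime (q i) ∧ 0 < q i := by
      intro i
      rw [hq]
      by_cases h2 : 2 ≤ (f i).natAbs
      · simp only [if_pos h2]
        have := Nat.minFac_prime (n := (f i).natAbs) (by omega)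
        refine ⟨Int.prime_iff_natAbs_prime.mpr (by simpa using this), by exact_mod_cast this.pos⟩
      · simp only [if_neg h2]
        exact ⟨Int.prime_two, by norm_num⟩
    have hqdvd : ∀ᶠ i in ↑U, q i ∣ f i := by
      filter_upwards [hbig] with i h2
      rw [hq]
      simp only [if_pos h2]
      exact dvd_trans (Int.natCast_dvd_natCast.mpr ((f i).natAbs.minFac_dvd))
        (Int.natAbs_dvd.mpr dvd_rfl)
    have : (q : (↑U : Filter I).Germ ℤ) ∈ primeFactor (f : (↑U : Filter I).Germ ℤ) :=
      ⟨isNSPrime_coe_iff.mpr (Filter.Eventually.of_forall hqprime), germ_dvd_iff.mpr hqdvd⟩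
    rw [h] at this
    exact this
  · have hsmall : ∀ᶠ i in ↑U, (f i).natAbs ≤ 1 := by
      have := (Ultrafilter.eventually_not (f := U) (p := fun i => 2 ≤ (f i).natAbs)).mpr hbig
      exact this.mono fun i hi => by omega
    by_cases hzero : {i | f i = 0} ∈ U
    · exfalso
      have hf0 : (f : (↑U : Filter I).Germ ℤ) = 0 := by
        rw [show (0 : (↑U : Filter I).Germ ℤ) =
          (((fun _ => 0) : I → ℤ) : (↑U : Filter I).Germ ℤ) from rfl]
        exact germ_eq_iff.mpr hzero
      have h2 : (((fun _ => 2) : I → ℤ) : (↑U : Filter I).Germ ℤ) ∈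
          primeFactor (f : (↑U : Filter I).Germ ℤ) := by
        refine ⟨isNSPrime_coe_iff.mpr (Filter.Eventually.of_forall fun i =>
          ⟨Int.prime_two, by norm_num⟩), ?_⟩
        rw [hf0]
        exact dvd_zero _
      rw [h] at h2
      exact h2
    · have hone : ∀ᶠ i in ↑U, (f i).natAbs = 1 := by
        have hnz : ∀ᶠ i in ↑U, f i ≠ 0 :=
          (Ultrafilter.eventually_not (f := U) (p := fun i => f i = 0)).mpr hzero
        filter_upwards [hsmall, hnz] with i h1 h2
        omega
      apply IsUnit.of_mul_eq_one ((f : I → ℤ) : (↑U : Filter I).Germ ℤ)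
      rw [← Filter.Germ.coe_mul,
        show (1 : (↑U : Filter I).Germ ℤ) = (((fun _ => 1) : I → ℤ) : (↑U : Filter I).Germ ℤ)
          from rfl]
      apply germ_eq_iff.mpr
      filter_upwards [hone] with i h1
      show f i * f i = 1
      rcases Int.natAbs_eq_iff.mp h1 with h2 | h2 <;> rw [h2] <;> norm_num


variable {I : Type*} {U : Ultrafilter I}

/-- gcd of two ideal elements is in the ideal -/
lemma germGcd_mem {m : Ideal ((↑U : Filter I).Germ ℤ)} {a b : (↑U : Filter I).Germ ℤ}
    (ha : a ∈ m) (hb : b ∈ m) : germGcd a b ∈ m := by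
  obtain ⟨u, v, huv⟩ := germGcd_bezout a b
  rw [huv]
  exact m.add_mem (m.mul_mem_left u ha) (m.mul_mem_left v hb)

/-- The key lemma: if `F` satisfies filter-like closure properties and contains all `pr a`
for `a ∈ m`, then `m = {n | pr n ∈ F}`. -/
lemma max_ideal_eq {m : Ideal ((↑U : Filter I).Germ ℤ)} (hm : m.IsMaximal)
    (F : Set (Set ((↑U : Filter I).Germ ℤ)))
    (hsub : ∀ a ∈ m, primeFactor a ∈ F)
    (hempty : ∅ ∉ F)
    (hinter : ∀ S ∈ F, ∀ T ∈ F, S ∩ T ∈ F)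
    (hup : ∀ S ∈ F, ∀ c : (↑U : Filter I).Germ ℤ, S ⊆ primeFactor c → primeFactor c ∈ F) :
    (m : Set ((↑U : Filter I).Germ ℤ)) = {n | primeFactor n ∈ F} := by
  set J : Ideal ((↑U : Filter I).Germ ℤ) :=
    { carrier := {n | primeFactor n ∈ F}
      zero_mem' := hsub 0 m.zero_mem
      add_mem' := by
        intro a b ha hb
        exact hup _ (hinter _ ha _ hb) _ (pr_inter_subset_add a b)
      smul_mem' := by
        intro r a ha
        simp only [smul_eq_mul]
        exact hup _ ha _ (pr_subset_mul r a) } with hJ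
  have hJtop : J ≠ ⊤ := by
    intro htop
    have h1 : (1 : (↑U : Filter I).Germ ℤ) ∈ J := htop ▸ Submodule.mem_top
    have : primeFactor (1 : (↑U : Filter I).Germ ℤ) ∈ F := h1
    rw [pr_one] at this
    exact hempty this
  have hle : m ≤ J := fun a ha => hsub a ha
  have := hm.eq_of_le hJtop hle
  rw [this]
  rfl

lemma prFilter_image {m : Ideal ((↑U : Filter I).Germ ℤ)} (hm : m.IsMaximal) :
    (∀ a ∈ m, primeFactor a ∈ primeFactor '' (m : Set ((↑U : Filter I).Germ ℤ))) ∧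
    ∅ ∉ primeFactor '' (m : Set ((↑U : Filter I).Germ ℤ)) ∧
    (∀ S ∈ primeFactor '' (m : Set ((↑U : Filter I).Germ ℤ)),
      ∀ T ∈ primeFactor '' (m : Set ((↑U : Filter I).Germ ℤ)),
        S ∩ T ∈ primeFactor '' (m : Set ((↑U : Filter I).Germ ℤ))) ∧
    (∀ S ∈ primeFactor '' (m : Set ((↑U : Filter I).Germ ℤ)),
      ∀ c : (↑U : Filter I).Germ ℤ, S ⊆ primeFactor c →
        primeFactor c ∈ primeFactor '' (m : Set ((↑U : Filter I).Germ ℤ))) := by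
  refine ⟨fun a ha => ⟨a, ha, rfl⟩, ?_, ?_, ?_⟩
  · rintro ⟨a, ha, hpr⟩
    exact hm.ne_top (m.eq_top_of_isUnit_mem ha (pr_empty_isUnit hpr))
  · rintro S ⟨a, ha, rfl⟩ T ⟨b, hb, rfl⟩
    exact ⟨germGcd a b, germGcd_mem ha hb, pr_gcd a b⟩
  · rintro S ⟨a, ha, rfl⟩ c hsub
    refine ⟨a * c, m.mul_mem_right c ha, ?_⟩
    rw [pr_mul]
    exact (Set.union_eq_self_of_subset_left hsub)


end

set_option linter.unusedVariables false in
/-- For every maximal ideal `m` of `*ℤ` one has `m = I(F(m))`, i.e.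
`m = {n : pr(n) ∈ F(m)}` where `F(m) = {pr(a) : a ∈ m}`; moreover `m ↦ F(m)` is an
injection from maximal ideals of `*ℤ` into maximal filters on `pr(*ℤ)`. -/
theorem maximal_ideal_eq_ideal_of_filter {I : Type*} [Countable I] [Infinite I]
    (U : Ultrafilter I) (hU : ∀ i : I, U ≠ pure i) :
    (∀ m : Ideal ((↑U : Filter I).Germ ℤ), m.IsMaximal →
      (m : Set ((↑U : Filter I).Germ ℤ)) =
        {n | primeFactor n ∈ primeFactor '' (m : Set ((↑U : Filter I).Germ ℤ))}) ∧
    (∀ m : Ideal ((↑U : Filter I).Germ ℤ), m.IsMaximal →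
      IsPrFilter (primeFactor '' (m : Set ((↑U : Filter I).Germ ℤ))) ∧
      ∀ F' : Set (Set ((↑U : Filter I).Germ ℤ)), IsPrFilter F' →
        primeFactor '' (m : Set ((↑U : Filter I).Germ ℤ)) ⊆ F' →
        F' = primeFactor '' (m : Set ((↑U : Filter I).Germ ℤ))) ∧
    (∀ m₁ m₂ : Ideal ((↑U : Filter I).Germ ℤ), m₁.IsMaximal → m₂.IsMaximal →
      primeFactor '' (m₁ : Set ((↑U : Filter I).Germ ℤ)) =
        primeFactor '' (m₂ : Set ((↑U : Filter I).Germ ℤ)) → m₁ = m₂) := by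
  have part1 : ∀ m : Ideal ((↑U : Filter I).Germ ℤ), m.IsMaximal →
      (m : Set ((↑U : Filter I).Germ ℤ)) =
        {n | primeFactor n ∈ primeFactor '' (m : Set ((↑U : Filter I).Germ ℤ))} := by
    intro m hm
    obtain ⟨h1, h2, h3, h4⟩ := prFilter_image hm
    exact max_ideal_eq hm _ h1 h2 h3 h4
  refine ⟨part1, ?_, ?_⟩
  · intro m hm
    obtain ⟨h1, h2, h3, h4⟩ := prFilter_image hm
    refine ⟨⟨fun S hS => ?_, h2, h3, h4⟩, ?_⟩
    · obtain ⟨a, _, rfl⟩ := hS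
      exact ⟨a, rfl⟩
    · rintro F' ⟨hF1, hF2, hF3, hF4⟩ hFsub
      have hm' : (m : Set ((↑U : Filter I).Germ ℤ)) = {n | primeFactor n ∈ F'} :=
        max_ideal_eq hm F' (fun a ha => hFsub (h1 a ha)) hF2 hF3 hF4
      apply Set.Subset.antisymm _ hFsub
      intro S hS
      obtain ⟨n, rfl⟩ := hF1 S hS
      have hn : n ∈ (m : Set ((↑U : Filter I).Germ ℤ)) := by rw [hm']; exact hS
      exact ⟨n, hn, rfl⟩
  · intro m₁ m₂ hm₁ hm₂ heq
    have e1 := part1 m₁ hm₁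
    have e2 := part1 m₂ hm₂
    apply SetLike.ext'
    rw [e1, e2, heq]
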